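/- Let p = f + εg ∈ 𝔻[t] be a monic polynomial over the dual numbers, with f = ∏ᵢ Nᵢ^{nᵢ} where N₁,…,N_m ∈ ℝ[t] are pairwise coprime irreducible monic polynomials. Then p factors into a product of monic polynomials in 𝔻[t] each having irreducible primal part if and only if ∏ᵢ Nᵢ^{nᵢ−1} divides g. -/

import Mathlib

open Polynomial TrivSqZeroExt Quaternion

noncomputable section

/-- the ring of dual numbers 𝔻 = ℝ[ε]/⟨ε²⟩ -/
abbrev DD : Type := DualNumber ℝ
/-- the Hamiltonian quaternions ℍ -/
abbrev HH : Type := Quaternion ℝ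
/-- the dual quaternions 𝔻ℍ, realized as quaternions over the dual numbers -/
abbrev DH : Type := Quaternion DD

/-- embedding of the real quaternions into the dual quaternions -/
def ofQ (p : HH) : DH := ⟨inl p.re, inl p.imI, inl p.imJ, inl p.imK⟩

/-- ε as a dual quaternion -/
def εq : DH := ((DualNumber.eps : DD) : DH)

/-- primal part of a dual quaternion -/
def primal (q : DH) : HH := ⟨(q.re).fst, (q.imI).fst, (q.imJ).fst, (q.imK).fst⟩

/-- dual part of a dual quaternion -/
def dualPart (q : DH) : HH := ⟨(q.re).snd, (q.imI).snd, (q.imJ).snd, (q.imK).snd⟩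

/-- coefficientwise conjugate of a dual quaternion polynomial -/
def pconj (M : Polynomial DH) : Polynomial DH := ∑ i ∈ M.support, C (star (M.coeff i)) * X ^ i

/-- coefficientwise conjugate of a quaternion polynomial -/
def qpconj (P : Polynomial HH) : Polynomial HH := ∑ i ∈ P.support, C (star (P.coeff i)) * X ^ i

/-- primal part of a dual quaternion polynomial -/
def Ppart (M : Polynomial DH) : Polynomial HH := ∑ i ∈ M.support, C (primal (M.coeff i)) * X ^ i

/-- dual part of a dual quaternion polynomial -/
def Dpart (M : Polynomial DH) : Polynomial HH := ∑ i ∈ M.support, C (dualPart (M.coeff i)) * X ^ i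

/-- primal part of a dual number polynomial -/
def dpr (p : Polynomial DD) : Polynomial ℝ := ∑ i ∈ p.support, C ((p.coeff i).fst) * X ^ i

/-- the dual number polynomial f + εg built from two real polynomials -/
def dpoly (f g : Polynomial ℝ) : Polynomial DD :=
  f.map (algebraMap ℝ DD) + (DualNumber.eps : DD) • g.map (algebraMap ℝ DD)

/-- embedding of quaternion polynomials into dual quaternion polynomials -/
def toDQp (P : Polynomial HH) : Polynomial DH := ∑ i ∈ P.support, C (ofQ (P.coeff i)) * X ^ i

/-- the quaternion unit i -/
def qi : HH := ⟨0, 1, 0, 0⟩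
/-- the quaternion unit j -/
def qj : HH := ⟨0, 0, 1, 0⟩
/-- the quaternion unit k -/
def qk : HH := ⟨0, 0, 0, 1⟩

def dsnd (p : Polynomial DD) : Polynomial ℝ := ∑ i ∈ p.support, C ((p.coeff i).snd) * X ^ i

lemma dd_coeff_fst (f g : Polynomial ℝ) (k : ℕ) : ((dpoly f g).coeff k).fst = f.coeff k := by
  simp [dpoly, coeff_smul, TrivSqZeroExt.algebraMap_eq_inl']
lemma dd_coeff_snd (f g : Polynomial ℝ) (k : ℕ) : ((dpoly f g).coeff k).snd = g.coeff k := by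
  simp [dpoly, coeff_smul, TrivSqZeroExt.algebraMap_eq_inl']

lemma dpr_coeff (p : Polynomial DD) (k : ℕ) : (dpr p).coeff k = (p.coeff k).fst := by
  classical
  simp only [dpr, finset_sum_coeff, coeff_C_mul, coeff_X_pow, mul_ite, mul_one, mul_zero]
  rw [Finset.sum_ite_eq p.support k _]
  by_cases h : k ∈ p.support
  · simp [h]
  · simp [h, Polynomial.notMem_support_iff.mp h]

lemma dsnd_coeff (p : Polynomial DD) (k : ℕ) : (dsnd p).coeff k = (p.coeff k).snd := by
  classical
  simp only [dsnd, finset_sum_coeff, coeff_C_mul, coeff_X_pow, mul_ite, mul_one, mul_zero]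
  rw [Finset.sum_ite_eq p.support k _]
  by_cases h : k ∈ p.support
  · simp [h]
  · simp [h, Polynomial.notMem_support_iff.mp h]

lemma dpoly_eq (p : Polynomial DD) : dpoly (dpr p) (dsnd p) = p := by
  ext k : 1
  exact TrivSqZeroExt.ext (by rw [dd_coeff_fst, dpr_coeff]) (by rw [dd_coeff_snd, dsnd_coeff])

lemma dpr_dpoly (f g : Polynomial ℝ) : dpr (dpoly f g) = f := by
  ext k; rw [dpr_coeff, dd_coeff_fst]

lemma dsnd_dpoly (f g : Polynomial ℝ) : dsnd (dpoly f g) = g := by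
  ext k; rw [dsnd_coeff, dd_coeff_snd]

lemma dpoly_inj {f g f' g' : Polynomial ℝ} (h : dpoly f g = dpoly f' g') : f = f' ∧ g = g' :=
  ⟨by rw [← dpr_dpoly f g, h, dpr_dpoly], by rw [← dsnd_dpoly f g, h, dsnd_dpoly]⟩

lemma dpoly_mul (a b c d : Polynomial ℝ) :
    dpoly a b * dpoly c d = dpoly (a * c) (a * d + b * c) := by
  simp only [dpoly, Polynomial.map_mul, Polynomial.map_add]
  have heps : (DualNumber.eps : DD) * DualNumber.eps = 0 := DualNumber.eps_mul_eps
  have hC : (C (DualNumber.eps : DD)) * C (DualNumber.eps : DD) = 0 := by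
    rw [← C_mul, heps, C_0]
  simp only [Polynomial.smul_eq_C_mul, Polynomial.map_mul, Polynomial.map_add]
  linear_combination (Polynomial.map (algebraMap ℝ DD) b * Polynomial.map (algebraMap ℝ DD) d) * hC

lemma dpoly_one : dpoly 1 0 = 1 := by
  simp [dpoly]

lemma dpr_map (p : Polynomial DD) :
    dpr p = p.map ((TrivSqZeroExt.fstHom ℝ ℝ ℝ).toRingHom) := by
  ext k; rw [dpr_coeff, coeff_map]; rfl

lemma dpr_monic {p : Polynomial DD} (h : p.Monic) : (dpr p).Monic := by
  rw [dpr_map]; exact h.map _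

lemma algebraMap_DD_inj : Function.Injective (algebraMap ℝ DD) := fun x y h => by
  have := congrArg TrivSqZeroExt.fst h
  simpa [TrivSqZeroExt.algebraMap_eq_inl'] using this

lemma dpoly_monic {f g : Polynomial ℝ} (hf : f.Monic) (h : g.degree < f.degree) :
    (dpoly f g).Monic := by
  apply Monic.add_of_left (hf.map _)
  calc ((DualNumber.eps : DD) • g.map (algebraMap ℝ DD)).degree
      ≤ (g.map (algebraMap ℝ DD)).degree := degree_smul_le _ _
    _ ≤ g.degree := degree_map_le
    _ < f.degree := h
    _ = (f.map (algebraMap ℝ DD)).degree := (degree_map_eq_of_injective algebraMap_DD_inj f).symm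

lemma g_deg_lt {f g : Polynomial ℝ} (hf : f.Monic) (hm : (dpoly f g).Monic) :
    g.degree < f.degree := by
  set p := dpoly f g with hp
  have hd : f.natDegree = p.natDegree := by
    apply le_antisymm
    · apply natDegree_le_iff_coeff_eq_zero.mpr
      intro k hk
      have h0 : p.coeff k = 0 := coeff_eq_zero_of_natDegree_lt hk
      rw [← dd_coeff_fst f g k, ← hp, h0]; rfl
    · apply le_natDegree_of_ne_zero
      rw [← dd_coeff_fst f g p.natDegree, ← hp, hm.coeff_natDegree]
      simp
  rw [degree_eq_natDegree hf.ne_zero]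
  rw [degree_lt_iff_coeff_zero]
  intro j hj
  have hj' : f.natDegree ≤ j := by exact_mod_cast hj
  rcases eq_or_lt_of_le hj' with hje | hjl
  · rw [← dd_coeff_snd f g j, ← hp, ← hje, hd, hm.coeff_natDegree]; rfl
  · have h0 : p.coeff j = 0 := coeff_eq_zero_of_natDegree_lt (hd ▸ hjl)
    rw [← dd_coeff_snd f g j, ← hp, h0]; rfl


lemma dpoly_prod {ι : Type*} [DecidableEq ι] (s : Finset ι) (a b : ι → Polynomial ℝ) :
    ∏ j ∈ s, dpoly (a j) (b j) =
      dpoly (∏ j ∈ s, a j) (∑ j ∈ s, b j * ∏ l ∈ s.erase j, a l) := by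
  classical
  induction s using Finset.induction_on with
  | empty => simp [dpoly_one]
  | insert x t hx ih =>
    rw [Finset.prod_insert hx, ih, dpoly_mul, Finset.prod_insert hx, Finset.sum_insert hx]
    congr 1
    rw [Finset.erase_insert hx, Finset.mul_sum]
    rw [add_comm, mul_comm (b x)]
    congr 1
    apply Finset.sum_congr rfl
    intro j hj
    have hxj : x ∉ t.erase j := fun h => hx (Finset.mem_of_mem_erase h)
    rw [Finset.erase_insert_of_ne (by rintro rfl; exact hx hj), Finset.prod_insert hxj]
    ring

lemma exists_sum_one {ι : Type*} [DecidableEq ι] (N : ι → Polynomial ℝ) (s : Finset ι)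
    (hs : s.Nonempty) (hcop : ∀ i ∈ s, ∀ j ∈ s, i ≠ j → IsCoprime (N i) (N j)) :
    ∃ e : ι → Polynomial ℝ, ∑ i ∈ s, e i * ∏ j ∈ s.erase i, N j = 1 := by
  classical
  induction hs using Finset.Nonempty.cons_induction with
  | singleton a => exact ⟨fun _ => 1, by simp⟩
  | cons a t hat ht ih =>
    obtain ⟨e', he'⟩ := ih (fun i hi j hj hij =>
      hcop i (Finset.mem_cons_of_mem hi) j (Finset.mem_cons_of_mem hj) hij)
    have hc : IsCoprime (N a) (∏ j ∈ t, N j) := by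
      apply IsCoprime.prod_right
      intro j hj
      exact hcop a (Finset.mem_cons_self a t) j (Finset.mem_cons_of_mem hj)
        (by rintro rfl; exact hat hj)
    obtain ⟨u, v, huv⟩ := hc
    refine ⟨fun i => if i = a then v else u * e' i, ?_⟩
    rw [Finset.sum_cons]
    have h1 : (Finset.cons a t hat).erase a = t := by
      rw [Finset.erase_cons]
    dsimp only
    rw [h1, if_pos rfl]
    have h2 : ∑ i ∈ t, (if i = a then v else u * e' i) * ∏ j ∈ (Finset.cons a t hat).erase i, N j
        = u * N a * ∑ i ∈ t, e' i * ∏ j ∈ t.erase i, N j := by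
      rw [Finset.mul_sum]
      apply Finset.sum_congr rfl
      intro i hi
      have hia : i ≠ a := by rintro rfl; exact hat hi
      rw [if_neg hia]
      have h3 : (Finset.cons a t hat).erase i = Finset.cons a (t.erase i)
          (fun h => hat (Finset.mem_of_mem_erase h)) := by
        ext x
        simp [Finset.mem_erase, Finset.mem_cons, and_or_left]
        constructor
        · rintro (⟨_, h⟩ | h)
          · exact Or.inl h
          · exact Or.inr h
        · rintro (rfl | h)
          · exact Or.inl ⟨fun h => hia h.symm, rfl⟩
          · exact Or.inr h
      rw [h3, Finset.prod_cons]
      ring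
    rw [h2, he', mul_one]
    linear_combination huv

lemma partial_frac {ι : Type*} [DecidableEq ι] [Fintype ι] [Nonempty ι] (N : ι → Polynomial ℝ)
    (hmon : ∀ i, (N i).Monic)
    (hcop : ∀ i j, i ≠ j → IsCoprime (N i) (N j)) (h : Polynomial ℝ)
    (hdeg : h.degree < (∏ i, N i).degree) :
    ∃ r : ι → Polynomial ℝ, (∀ i, (r i).degree < (N i).degree) ∧
      ∑ i, r i * ∏ j ∈ Finset.univ.erase i, N j = h := by
  classical
  obtain ⟨e, he⟩ := exists_sum_one N Finset.univ Finset.univ_nonempty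
    (fun i _ j _ hij => hcop i j hij)
  set r : ι → Polynomial ℝ := fun i => (h * e i) %ₘ N i with hr
  set q : ι → Polynomial ℝ := fun i => (h * e i) /ₘ N i with hq
  have key : ∀ i, r i = h * e i - N i * q i := fun i => by
    rw [hr, hq]; dsimp only
    rw [eq_sub_iff_add_eq, modByMonic_add_div _ (N i)]
  have hdr : ∀ i, (r i).degree < (N i).degree := fun i =>
    degree_modByMonic_lt _ (hmon i)
  have hprodmon : (∏ i, N i).Monic := monic_prod_of_monic _ _ (fun i _ => hmon i)
  have hDbot : (⊥ : WithBot ℕ) < (∏ i, N i).degree := by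
    rw [bot_lt_iff_ne_bot, ne_eq, degree_eq_bot]
    exact hprodmon.ne_zero
  have hterm : ∀ i, (r i * ∏ j ∈ Finset.univ.erase i, N j).degree < (∏ i, N i).degree := by
    intro i
    rw [degree_mul, ← Finset.mul_prod_erase _ _ (Finset.mem_univ i), degree_mul]
    apply WithBot.add_lt_add_right _ (hdr i)
    rw [ne_eq, degree_eq_bot]
    exact (monic_prod_of_monic _ _ (fun j _ => hmon j)).ne_zero
  have hDlt : (∑ i, r i * ∏ j ∈ Finset.univ.erase i, N j).degree < (∏ i, N i).degree := by
    apply lt_of_le_of_lt (degree_sum_le _ _)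
    rw [Finset.sup_lt_iff hDbot]
    exact fun i _ => hterm i
  have hsum : ∑ i, r i * ∏ j ∈ Finset.univ.erase i, N j
      = h - (∑ i, q i) * ∏ i, N i := by
    calc ∑ i, r i * ∏ j ∈ Finset.univ.erase i, N j
        = ∑ i, (h * (e i * ∏ j ∈ Finset.univ.erase i, N j)
            - q i * (N i * ∏ j ∈ Finset.univ.erase i, N j)) := by
          apply Finset.sum_congr rfl; intro i _; rw [key i]; ring
      _ = h * ∑ i, e i * ∏ j ∈ Finset.univ.erase i, N j
            - (∑ i, q i) * ∏ i, N i := by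
          rw [Finset.sum_sub_distrib, Finset.mul_sum, Finset.sum_mul]
          congr 1
          apply Finset.sum_congr rfl; intro i _
          rw [Finset.mul_prod_erase _ _ (Finset.mem_univ i)]
      _ = h - (∑ i, q i) * ∏ i, N i := by rw [he, mul_one]
  have hq0 : (∑ i, q i) * ∏ i, N i = 0 := by
    by_contra hne
    have hqne : (∑ i, q i) ≠ 0 := fun h0 => hne (by rw [h0, zero_mul])
    have : (∏ i, N i).degree ≤ ((∑ i, q i) * ∏ i, N i).degree := by
      rw [degree_mul]
      exact le_add_of_nonneg_left (zero_le_degree_iff.mpr hqne)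
    have h2 : ((∑ i, q i) * ∏ i, N i).degree < (∏ i, N i).degree := by
      have := hsum
      have h3 : (∑ i, q i) * ∏ i, N i
          = h - ∑ i, r i * ∏ j ∈ Finset.univ.erase i, N j := by
        rw [hsum]; ring
      rw [h3]
      exact lt_of_le_of_lt (degree_sub_le _ _) (max_lt hdeg hDlt)
    exact absurd (lt_of_le_of_lt this h2) (lt_irrefl _)
  exact ⟨r, hdr, by rw [hsum, hq0, sub_zero]⟩

theorem fwd (m : ℕ) (N : Fin m → Polynomial ℝ) (n : Fin m → ℕ)
    (hmon : ∀ i, (N i).Monic) (hirr : ∀ i, Irreducible (N i)) (hn : ∀ i, 0 < n i)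
    (f g : Polynomial ℝ) (hf : f = ∏ i, N i ^ n i)
    (k : ℕ) (F : Fin k → Polynomial DD) (hprod : dpoly f g = ∏ j, F j)
    (hF : ∀ j, (F j).Monic ∧ Irreducible (dpr (F j))) :
    (∏ i, N i ^ (n i - 1)) ∣ g := by
  classical
  set a : Fin k → Polynomial ℝ := fun j => dpr (F j) with ha
  set b : Fin k → Polynomial ℝ := fun j => dsnd (F j) with hb
  have hFj : ∀ j, F j = dpoly (a j) (b j) := fun j => (dpoly_eq (F j)).symm
  have hprod2 : dpoly f g = dpoly (∏ j, a j) (∑ j, b j * ∏ l ∈ Finset.univ.erase j, a l) := by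
    rw [hprod, Finset.prod_congr rfl (fun j _ => hFj j), dpoly_prod]
  obtain ⟨hfa, hgb⟩ := dpoly_inj hprod2
  rw [hgb]
  apply Finset.dvd_sum
  intro j _
  have haj_mon : (a j).Monic := dpr_monic (hF j).1
  have haj_irr : Irreducible (a j) := (hF j).2
  have haj_prime : Prime (a j) := haj_irr.prime
  have hdvd_f : a j ∣ ∏ i, N i ^ n i := by
    rw [← hf, hfa]; exact Finset.dvd_prod_of_mem a (Finset.mem_univ j)
  obtain ⟨i, -, hdvd_pow⟩ := haj_prime.exists_mem_finset_dvd hdvd_f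
  have hdvd_N : a j ∣ N i := haj_prime.dvd_of_dvd_pow hdvd_pow
  have haN : a j = N i := eq_of_monic_of_associated haj_mon (hmon i)
    (haj_irr.associated_of_dvd (hirr i) hdvd_N)
  set K : Polynomial ℝ := N i ^ (n i - 1) * ∏ i' ∈ Finset.univ.erase i, N i' ^ n i' with hK
  have hfK : f = N i * K := by
    rw [hf, ← Finset.mul_prod_erase _ _ (Finset.mem_univ i), hK, ← mul_assoc,
      ← pow_succ', Nat.sub_add_cancel (hn i)]
  have hcancel : ∏ l ∈ Finset.univ.erase j, a l = K := by
    have h1 : a j * ∏ l ∈ Finset.univ.erase j, a l = a j * K := by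
      rw [Finset.mul_prod_erase _ _ (Finset.mem_univ j), ← hfa, hfK, haN]
    exact mul_left_cancel₀ haj_irr.ne_zero h1
  have hPK : (∏ i', N i' ^ (n i' - 1)) ∣ K := by
    rw [hK, ← Finset.mul_prod_erase _ (fun i' => N i' ^ (n i' - 1)) (Finset.mem_univ i)]
    exact mul_dvd_mul_left _ (Finset.prod_dvd_prod_of_dvd _ _
      (fun i' _ => pow_dvd_pow _ (Nat.sub_le _ _)))
  rw [hcancel]
  exact Dvd.dvd.mul_left hPK (b j)

lemma dpoly_pow (a : Polynomial ℝ) (t : ℕ) : (dpoly a 0) ^ t = dpoly (a ^ t) 0 := by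
  induction t with
  | zero => simp [dpoly_one]
  | succ t ih => rw [pow_succ, ih, dpoly_mul]; rw [mul_zero, zero_mul, add_zero, ← pow_succ]

theorem bwd (m : ℕ) (N : Fin m → Polynomial ℝ) (n : Fin m → ℕ)
    (hmon : ∀ i, (N i).Monic) (hirr : ∀ i, Irreducible (N i))
    (hcop : ∀ i j, i ≠ j → IsCoprime (N i) (N j)) (hn : ∀ i, 0 < n i)
    (f g : Polynomial ℝ) (hf : f = ∏ i, N i ^ n i) (hmonic : (dpoly f g).Monic)
    (hdvd : (∏ i, N i ^ (n i - 1)) ∣ g) :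
    ∃ (k : ℕ) (F : Fin k → Polynomial DD),
        dpoly f g = ∏ j, F j ∧ ∀ j, (F j).Monic ∧ Irreducible (dpr (F j)) := by
  classical
  have hfmon : f.Monic := hf ▸ monic_prod_of_monic _ _ fun i _ => (hmon i).pow _
  rcases Nat.eq_zero_or_pos m with hm | hm
  · subst hm
    have hf1 : f = 1 := by rw [hf, Finset.univ_eq_empty, Finset.prod_empty]
    have hg0 : g = 0 := by
      have hlt := g_deg_lt hfmon hmonic
      rw [hf1, degree_one] at hlt
      by_contra hne
      exact absurd hlt (not_lt.mpr (zero_le_degree_iff.mpr hne))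
    refine ⟨0, Fin.elim0, ?_, fun j => j.elim0⟩
    rw [hf1, hg0, dpoly_one, Finset.univ_eq_empty, Finset.prod_empty]
  · haveI : Nonempty (Fin m) := Fin.pos_iff_nonempty.mp hm
    obtain ⟨h, hg⟩ := hdvd
    set P := ∏ i, N i ^ (n i - 1) with hP
    have hPmon : P.Monic := monic_prod_of_monic _ _ fun i _ => (hmon i).pow _
    have hQmon : (∏ i, N i).Monic := monic_prod_of_monic _ _ fun i _ => hmon i
    have hfPQ : f = P * ∏ i, N i := by
      rw [hf, hP, ← Finset.prod_mul_distrib]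
      apply Finset.prod_congr rfl; intro i _
      rw [← pow_succ, Nat.sub_add_cancel (hn i)]
    have hdeg : h.degree < (∏ i, N i).degree := by
      rcases eq_or_ne h 0 with h0 | h0
      · rw [h0, degree_zero]
        exact bot_lt_iff_ne_bot.mpr (by rw [ne_eq, degree_eq_bot]; exact hQmon.ne_zero)
      · have h1 : g.degree < f.degree := g_deg_lt hfmon hmonic
        rw [hg, hfPQ, degree_mul, degree_mul] at h1
        have hPbot : P.degree ≠ ⊥ := by rw [ne_eq, degree_eq_bot]; exact hPmon.ne_zero
        exact (WithBot.add_lt_add_iff_left hPbot).mp h1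
    obtain ⟨r, hr, hrsum⟩ := partial_frac N hmon hcop h hdeg
    set grp : Fin m → List (Polynomial DD) :=
      fun i => dpoly (N i) (r i) :: List.replicate (n i - 1) (dpoly (N i) 0) with hgrp
    set L : List (Polynomial DD) := ((List.finRange m).map grp).flatten with hL
    have hmem : ∀ x ∈ L, x.Monic ∧ Irreducible (dpr x) := by
      intro x hx
      rw [hL, List.mem_flatten] at hx
      obtain ⟨l, hl, hxl⟩ := hx
      rw [List.mem_map] at hl
      obtain ⟨i, -, rfl⟩ := hl
      have hNbot : (0 : Polynomial ℝ).degree < (N i).degree := by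
        rw [degree_zero]
        exact bot_lt_iff_ne_bot.mpr (by rw [ne_eq, degree_eq_bot]; exact (hmon i).ne_zero)
      rw [hgrp] at hxl
      rcases List.mem_cons.mp hxl with rfl | hxl'
      · exact ⟨dpoly_monic (hmon i) (hr i), by rw [dpr_dpoly]; exact hirr i⟩
      · rw [List.eq_of_mem_replicate hxl']
        exact ⟨dpoly_monic (hmon i) hNbot, by rw [dpr_dpoly]; exact hirr i⟩
    have hgrpprod : ∀ i, (grp i).prod = dpoly (N i ^ n i) (r i * N i ^ (n i - 1)) := by
      intro i
      rw [hgrp]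
      dsimp only
      rw [List.prod_cons, List.prod_replicate, dpoly_pow, dpoly_mul]
      rw [mul_zero, zero_add, ← pow_succ', Nat.sub_add_cancel (hn i)]
    have hLprod : L.prod = dpoly f g := by
      rw [hL, List.prod_flatten, List.map_map]
      rw [← Fin.prod_univ_def (List.prod ∘ grp)]
      simp only [Function.comp]
      rw [Finset.prod_congr rfl (fun i _ => hgrpprod i), dpoly_prod]
      congr 1
      · exact hf.symm
      · rw [hg, ← hrsum, Finset.mul_sum]
        apply Finset.sum_congr rfl
        intro i _
        have hPsplit : P = N i ^ (n i - 1) * ∏ i' ∈ Finset.univ.erase i, N i' ^ (n i' - 1) :=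
          (Finset.mul_prod_erase _ _ (Finset.mem_univ i)).symm
        rw [hPsplit]
        have hsplit2 : ∏ l ∈ Finset.univ.erase i, N l ^ n l
            = (∏ l ∈ Finset.univ.erase i, N l ^ (n l - 1)) * ∏ l ∈ Finset.univ.erase i, N l := by
          rw [← Finset.prod_mul_distrib]
          apply Finset.prod_congr rfl
          intro l _
          rw [← pow_succ, Nat.sub_add_cancel (hn l)]
        rw [hsplit2]
        ring
    refine ⟨L.length, fun j => L.get j, ?_, fun j => hmem _ (by simpa using L.get_mem j.1 j.2)⟩
    rw [← hLprod, Fin.prod_univ_def, List.map_get_finRange]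

/-- A monic p = f + εg ∈ 𝔻[t] with f = ∏ Nᵢ^{nᵢ} (Nᵢ coprime irreducible monic) factors into
monic polynomials with irreducible primal part iff ∏ Nᵢ^{nᵢ−1} divides g. -/
theorem stmt10 (m : ℕ) (N : Fin m → Polynomial ℝ) (n : Fin m → ℕ)
    (hmon : ∀ i, (N i).Monic) (hirr : ∀ i, Irreducible (N i))
    (hcop : ∀ i j, i ≠ j → IsCoprime (N i) (N j)) (hn : ∀ i, 0 < n i)
    (f g : Polynomial ℝ) (hf : f = ∏ i, N i ^ n i) (hmonic : (dpoly f g).Monic) :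
    (∃ (k : ℕ) (F : Fin k → Polynomial DD),
        dpoly f g = ∏ j, F j ∧ ∀ j, (F j).Monic ∧ Irreducible (dpr (F j))) ↔
      (∏ i, N i ^ (n i - 1)) ∣ g := by
  constructor
  · rintro ⟨k, F, hprod, hFp⟩
    exact fwd m N n hmon hirr hn f g hf k F hprod hFp
  · intro hdvd
    exact bwd m N n hmon hirr hcop hn f g hf hmonic hdvd
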